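/- For all integers m ≥ 0 and I ≥ 1, Σ_{k=0}^{I} (−1)^k · C(m+I+k−1, m+I−1) · C(m+I−1, m+k) = (−1)^{I+1} = −(−1)^I. -/

import Mathlib

open PowerSeries

lemma poly_coeff_one_sub_pow (n j : ℕ) :
    ((1 - Polynomial.X : Polynomial ℤ) ^ n).coeff j = (-1) ^ j * (n.choose j : ℤ) := by
  have h1 : (1 - Polynomial.X : Polynomial ℤ) =
      Polynomial.C (-1) * (Polynomial.X + Polynomial.C (-1)) := by
    simp; ring
  rw [h1, mul_pow, ← map_pow, Polynomial.coeff_C_mul, Polynomial.coeff_X_add_C_pow]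
  by_cases h : j ≤ n
  · have hsq : ((-1 : ℤ) ^ (n - j)) * ((-1) ^ (n - j)) = 1 := by
      rw [← pow_add]; exact Even.neg_one_pow ⟨_, rfl⟩
    have hn : (-1 : ℤ) ^ n = (-1) ^ j * (-1) ^ (n - j) := by
      rw [← pow_add, Nat.add_sub_cancel' h]
    linear_combination ((-1 : ℤ) ^ (n - j) * (n.choose j : ℤ)) * hn
      + ((-1 : ℤ) ^ j * (n.choose j : ℤ)) * hsq
  · rw [Nat.choose_eq_zero_of_lt (not_le.mp h)]
    simp

lemma ps_coeff_one_sub_pow (n j : ℕ) :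
    (PowerSeries.coeff (R := ℤ) j) ((1 - PowerSeries.X) ^ n) = (-1) ^ j * (n.choose j : ℤ) := by
  have h : ((1 - PowerSeries.X : ℤ⟦X⟧) ^ n)
      = (((1 - Polynomial.X : Polynomial ℤ) ^ n : Polynomial ℤ) : ℤ⟦X⟧) := by
    rw [Polynomial.coe_pow, Polynomial.coe_sub, Polynomial.coe_one, Polynomial.coe_X]
  rw [h, Polynomial.coeff_coe, poly_coeff_one_sub_pow]

lemma key_sum (n r : ℕ) :
    (∑ j ∈ Finset.range (r + 1),
      (-1 : ℤ) ^ j * (n.choose j : ℤ) * (((n + (r - j)).choose n : ℕ) : ℤ)) = 1 := by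
  have hmain : ((1 - PowerSeries.X : ℤ⟦X⟧) ^ n) * (invOneSubPow ℤ (n + 1)).val
      = (invOneSubPow ℤ 1).val := by
    have h2 : ((1 - PowerSeries.X : ℤ⟦X⟧) ^ n) * (invOneSubPow ℤ (n + 1)).val
        * (1 - PowerSeries.X) = 1 := by
      rw [mul_assoc, mul_comm ((invOneSubPow ℤ (n + 1)).val), ← mul_assoc, ← pow_succ,
        ← invOneSubPow_inv_eq_one_sub_pow]
      exact (invOneSubPow ℤ (n + 1)).inv_val
    have h3 : (1 - PowerSeries.X : ℤ⟦X⟧) * (invOneSubPow ℤ 1).val = 1 := by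
      have := (invOneSubPow ℤ 1).inv_val
      rwa [invOneSubPow_inv_eq_one_sub_pow, pow_one] at this
    calc ((1 - PowerSeries.X : ℤ⟦X⟧) ^ n) * (invOneSubPow ℤ (n + 1)).val
        = ((1 - PowerSeries.X : ℤ⟦X⟧) ^ n) * (invOneSubPow ℤ (n + 1)).val
          * ((1 - PowerSeries.X) * (invOneSubPow ℤ 1).val) := by rw [h3, mul_one]
      _ = ((1 - PowerSeries.X : ℤ⟦X⟧) ^ n) * (invOneSubPow ℤ (n + 1)).val
          * (1 - PowerSeries.X) * (invOneSubPow ℤ 1).val := by ring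
      _ = (invOneSubPow ℤ 1).val := by rw [h2, one_mul]
  have hc := congrArg (PowerSeries.coeff (R := ℤ) r) hmain
  rw [PowerSeries.coeff_mul, invOneSubPow_val_succ_eq_mk_add_choose] at hc
  have h1 : (invOneSubPow ℤ 1).val = PowerSeries.mk fun s => ((0 + s).choose 0 : ℤ) :=
    invOneSubPow_val_succ_eq_mk_add_choose ℤ 0
  rw [h1, PowerSeries.coeff_mk] at hc
  simp only [PowerSeries.coeff_mk, Nat.zero_add, Nat.choose_zero_right, Nat.cast_one] at hc
  rw [Finset.Nat.sum_antidiagonal_eq_sum_range_succ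
    (fun a b => (PowerSeries.coeff (R := ℤ) a) ((1 - PowerSeries.X) ^ n) * ((n + b).choose n : ℤ))] at hc
  have heq : (∑ j ∈ Finset.range (r + 1),
        (-1 : ℤ) ^ j * (n.choose j : ℤ) * (((n + (r - j)).choose n : ℕ) : ℤ))
      = ∑ j ∈ Finset.range (r + 1),
        (PowerSeries.coeff (R := ℤ) j) ((1 - PowerSeries.X) ^ n) * (((n + (r - j)).choose n : ℕ) : ℤ) :=
    Finset.sum_congr rfl fun j _ => by rw [ps_coeff_one_sub_pow]
  rw [heq]
  exact hc

/-- For all integers `m ≥ 0` and `I ≥ 1`,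
`∑_{k=0}^{I} (−1)^k C(m+I+k−1, m+I−1) C(m+I−1, m+k) = (−1)^{I+1} = −(−1)^I`. -/
theorem alternating_binomial_identity_shifted (m I : ℕ) (hI : 1 ≤ I) :
    (∑ k ∈ Finset.range (I + 1),
      (-1 : ℤ) ^ k * (Nat.choose (m + I + k - 1) (m + I - 1) : ℤ) *
        (Nat.choose (m + I - 1) (m + k) : ℤ)) = (-1 : ℤ) ^ (I + 1) ∧
    ((-1 : ℤ) ^ (I + 1) = -(-1 : ℤ) ^ I) := by
  obtain ⟨i, rfl⟩ : ∃ i, I = i + 1 := ⟨I - 1, (Nat.succ_pred_eq_of_pos hI).symm⟩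
  constructor
  · have hsimp : ∀ k, m + (i + 1) + k - 1 = m + i + k := by omega
    have hsimp2 : m + (i + 1) - 1 = m + i := by omega
    simp only [hsimp, hsimp2]
    rw [Finset.sum_range_succ]
    have hz : (((m + i).choose (m + (i + 1))) : ℤ) = 0 := by
      rw [Nat.choose_eq_zero_of_lt (by omega)]; exact Int.natCast_zero
    rw [hz, mul_zero, add_zero]
    have hkey := key_sum (m + i) i
    rw [← Finset.sum_range_reflect] at hkey
    have hcg : ∀ k ∈ Finset.range (i + 1),
        (-1 : ℤ) ^ (i + 1 - 1 - k) * ((m + i).choose (i + 1 - 1 - k) : ℤ) *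
          (((m + i + (i - (i + 1 - 1 - k))).choose (m + i) : ℕ) : ℤ)
        = (-1 : ℤ) ^ i * ((-1 : ℤ) ^ k * ((m + i + k).choose (m + i) : ℤ) *
            ((m + i).choose (m + k) : ℤ)) := by
      intro k hk
      have hki : k ≤ i := Nat.lt_succ_iff.mp (Finset.mem_range.mp hk)
      have e1 : i + 1 - 1 - k = i - k := by omega
      have e2 : i - (i - k) = k := by omega
      have e3 : (m + i).choose (i - k) = (m + i).choose (m + k) := by
        rw [← Nat.choose_symm (by omega : m + k ≤ m + i)]
        congr 1; omega
      rw [e1, e2, e3]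
      have hthis : (-1 : ℤ) ^ (i - k) * (-1 : ℤ) ^ k = (-1) ^ i := by
        rw [← pow_add, Nat.sub_add_cancel hki]
      have hsq : ((-1 : ℤ) ^ k) * ((-1) ^ k) = 1 := by
        rw [← pow_add]; exact Even.neg_one_pow ⟨_, rfl⟩
      have e4 : (-1 : ℤ) ^ (i - k) = (-1) ^ i * (-1) ^ k := by
        linear_combination ((-1 : ℤ) ^ k) * hthis - ((-1 : ℤ) ^ (i - k)) * hsq
      rw [e4]; ring
    rw [Finset.sum_congr rfl hcg, ← Finset.mul_sum] at hkey
    have hsqi : ((-1 : ℤ) ^ i) * ((-1) ^ i) = 1 := by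
      rw [← pow_add]; exact Even.neg_one_pow ⟨_, rfl⟩
    have hS : (∑ k ∈ Finset.range (i + 1),
        (-1 : ℤ) ^ k * ((m + i + k).choose (m + i) : ℤ) * ((m + i).choose (m + k) : ℤ))
        = (-1 : ℤ) ^ i := by
      calc (∑ k ∈ Finset.range (i + 1),
          (-1 : ℤ) ^ k * ((m + i + k).choose (m + i) : ℤ) * ((m + i).choose (m + k) : ℤ))
          = ((-1 : ℤ) ^ i * (-1) ^ i) * ∑ k ∈ Finset.range (i + 1),
            (-1 : ℤ) ^ k * ((m + i + k).choose (m + i) : ℤ) * ((m + i).choose (m + k) : ℤ) := by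
            rw [hsqi, one_mul]
        _ = (-1 : ℤ) ^ i * ((-1 : ℤ) ^ i * ∑ k ∈ Finset.range (i + 1),
            (-1 : ℤ) ^ k * ((m + i + k).choose (m + i) : ℤ) * ((m + i).choose (m + k) : ℤ)) := by
            ring
        _ = (-1 : ℤ) ^ i := by rw [hkey, mul_one]
    rw [hS, show i + 1 + 1 = i + 2 from rfl, pow_add]
    norm_num
  · rw [pow_succ]; ring
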